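/- Let λ be a partition with at most m parts, μ a composition of length m with |μ| = |λ|, and ν ∈ ℤ_{≥0}^{m−1} with ν_i + μ_i ≥ μ_{i+1} for all 1 ≤ i ≤ m−1. For every T ∈ SST(λ,μ), the filling θ_ν(T) of Sh_ν(μ) is a semistandard skew tableau if and only if ν_i ≥ d_i(T) for every 1 ≤ i ≤ m−1. -/

import Mathlib

/-!
Statement 10 (Lemma 5.2): θ_ν(T) is semistandard iff ν_i ≥ d_i(T) for all i.

Finite skew tableaux are encoded by row data as in Statement 1: `m` rows
indexed top to bottom, row `r` occupying (0-indexed) columns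
`off r, …, off r + len r - 1`; fillings `f : ℕ → ℕ → ℕ` are positive inside
the shape and `0` outside.  Partitions and compositions are 0-indexed
functions `ℕ → ℕ` vanishing beyond their length.
-/

def IsFilling (m : ℕ) (len : ℕ → ℕ) (f : ℕ → ℕ → ℕ) : Prop :=
  (∀ i k, i < m → k < len i → 0 < f i k) ∧
  (∀ i k, m ≤ i ∨ len i ≤ k → f i k = 0)

def EntriesLE (n : ℕ) (f : ℕ → ℕ → ℕ) : Prop := ∀ i k, f i k ≤ n

def RowsWeak (m : ℕ) (len : ℕ → ℕ) (f : ℕ → ℕ → ℕ) : Prop :=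
  ∀ i, i < m → ∀ k, k + 1 < len i → f i k ≤ f i (k + 1)

def ColsStrict (m : ℕ) (off len : ℕ → ℕ) (f : ℕ → ℕ → ℕ) : Prop :=
  ∀ i j, i + 1 < m → off i ≤ j → j < off i + len i →
    off (i + 1) ≤ j → j < off (i + 1) + len (i + 1) →
    f i (j - off i) < f (i + 1) (j - off (i + 1))

def Semistandard (m : ℕ) (off len : ℕ → ℕ) (f : ℕ → ℕ → ℕ) : Prop :=
  RowsWeak m len f ∧ ColsStrict m off len f

def IsSkewShape (m : ℕ) (off len : ℕ → ℕ) : Prop :=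
  ∀ i, i + 1 < m → off (i + 1) ≤ off i ∧ off (i + 1) + len (i + 1) ≤ off i + len i

def shiftRow (off : ℕ → ℕ) (i0 : ℕ) : ℕ → ℕ := fun i => if i = i0 then off i - 1 else off i

def Nonmovable (m : ℕ) (off len : ℕ → ℕ) (f : ℕ → ℕ → ℕ) : Prop :=
  Semistandard m off len f ∧
  ∀ i0, i0 < m → 0 < len i0 →
    ¬ (0 < off i0 ∧ IsSkewShape m (shiftRow off i0) len ∧
        Semistandard m (shiftRow off i0) len f)

def rowCount (len : ℕ → ℕ) (f : ℕ → ℕ → ℕ) (i v : ℕ) : ℕ :=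
  ((Finset.range (len i)).filter (fun k => f i k = v)).card

/-- the number of entries of `f` equal to `v`. -/
def content (m : ℕ) (len : ℕ → ℕ) (f : ℕ → ℕ → ℕ) (v : ℕ) : ℕ :=
  ∑ i ∈ Finset.range m, rowCount len f i v

/-- the reading word of a tableau: rows top to bottom, each read right to left. -/
def word (m : ℕ) (len : ℕ → ℕ) (f : ℕ → ℕ → ℕ) : List ℕ :=
  (List.range m).flatMap (fun i => ((List.range (len i)).reverse.map (f i)))

/-- a lattice word: every initial segment contains at least as many `i`'s as `(i+1)`'s. -/
def IsLatticeWord (w : List ℕ) : Prop :=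
  ∀ p v : ℕ, (w.take p).count (v + 2) ≤ (w.take p).count (v + 1)

/-- a Littlewood–Richardson tableau: rows weakly increasing, lattice reading word. -/
def IsLR (m : ℕ) (len : ℕ → ℕ) (f : ℕ → ℕ → ℕ) : Prop :=
  RowsWeak m len f ∧ IsLatticeWord (word m len f)

/-- LR tableaux of the given shape and content `η` (not necessarily semistandard). -/
def LRset (m : ℕ) (len : ℕ → ℕ) (η : ℕ → ℕ) : Set (ℕ → ℕ → ℕ) :=
  {f | IsFilling m len f ∧ IsLR m len f ∧ ∀ v, content m len f (v + 1) = η v}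

/-- `LR₀(A,η)`: nonmovable LR tableaux of shape `A` and content `η`. -/
def LR0set (m : ℕ) (off len : ℕ → ℕ) (η : ℕ → ℕ) : Set (ℕ → ℕ → ℕ) :=
  {f | IsFilling m len f ∧ IsLR m len f ∧ Nonmovable m off len f ∧
    ∀ v, content m len f (v + 1) = η v}

/-- semistandard tableaux of the given shape and content `μ`. -/
def SSTset (m : ℕ) (off len : ℕ → ℕ) (μ : ℕ → ℕ) : Set (ℕ → ℕ → ℕ) :=
  {f | IsFilling m len f ∧ Semistandard m off len f ∧
    ∀ v, content m len f (v + 1) = μ v}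

/-- offsets of the rows of `Sh_ν(μ)` (`ν` 0-indexed: `nu r = ν_{r+1}`):
row `r` (from the top) has offset `ν_{r+1} + ⋯ + ν_{m-1}`. -/
def shOff (m : ℕ) (nu : ℕ → ℕ) : ℕ → ℕ := fun r => ∑ j ∈ Finset.Ico r (m - 1), nu j

/-- the number of entries equal to `v` in the first `r` rows of `f`. -/
def cntRows (len : ℕ → ℕ) (f : ℕ → ℕ → ℕ) (v r : ℕ) : ℕ :=
  ∑ i ∈ Finset.range r, rowCount len f i v

/-- the map `θ`: row `k` (from the top, 0-indexed) of `θ(T)` lists, in weakly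
increasing order, the (1-indexed) indices of the rows of `T` containing the
entry `k+1`. -/
def theta (m : ℕ) (len : ℕ → ℕ) (μ : ℕ → ℕ) (f : ℕ → ℕ → ℕ) : ℕ → ℕ → ℕ :=
  fun k b => if k < m ∧ b < μ k then
      1 + ((Finset.range m).filter (fun r => cntRows len f (k + 1) (r + 1) ≤ b)).card
    else 0

/-- `M` is a set of pairwise disjoint descent pairs for the value `v`:
each pair consists of a cell containing `v` and a cell containing `v+1`
strictly below it. -/
def IsDescentPairs (m : ℕ) (len : ℕ → ℕ) (f : ℕ → ℕ → ℕ) (v : ℕ)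
    (M : Finset ((ℕ × ℕ) × (ℕ × ℕ))) : Prop :=
  (∀ p ∈ M, p.1.1 < m ∧ p.1.2 < len p.1.1 ∧ p.2.1 < m ∧ p.2.2 < len p.2.1 ∧
    f p.1.1 p.1.2 = v ∧ f p.2.1 p.2.2 = v + 1 ∧ p.1.1 < p.2.1) ∧
  (∀ p ∈ M, ∀ q ∈ M, p ≠ q → p.1 ≠ q.1 ∧ p.2 ≠ q.2)

/-- `ζ_v(T)`: the maximal number of pairwise disjoint descent pairs `(v, v+1)`. -/
noncomputable def zeta (m : ℕ) (len : ℕ → ℕ) (f : ℕ → ℕ → ℕ) (v : ℕ) : ℕ :=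
  sSup {c | ∃ M, IsDescentPairs m len f v M ∧ M.card = c}

/-- the `i`-th exponent `d_i(T) = μ_{i+1} - ζ_i(T)` (here `μ` is 0-indexed,
so `μ_{i+1} = μ i`; the argument `i` is the 1-based index `1 ≤ i ≤ m-1`). -/
noncomputable def expnt (m : ℕ) (len : ℕ → ℕ) (μ : ℕ → ℕ) (f : ℕ → ℕ → ℕ) (i : ℕ) : ℕ :=
  μ i - zeta m len f i

section ThetaHelpers

open Finset

/-- A downward-closed subset of `range n` is an initial segment. -/
lemma dc_filter_range_eq {n : ℕ} {P : ℕ → Prop} [DecidablePred P]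
    (h : ∀ x y, x < n → y < n → x ≤ y → P y → P x) :
    (Finset.range n).filter P = Finset.range (((Finset.range n).filter P).card) := by
  ext x
  simp only [mem_filter, mem_range]
  constructor
  · rintro ⟨hxn, hPx⟩
    have hsub : Finset.range (x + 1) ⊆ (Finset.range n).filter P := by
      intro y hy
      simp only [mem_range, Nat.lt_succ_iff] at hy
      exact mem_filter.2 ⟨mem_range.2 (lt_of_le_of_lt hy hxn),
        h y x (lt_of_le_of_lt hy hxn) hxn hy hPx⟩
    have := Finset.card_le_card hsub
    simpa using this
  · intro hx
    by_cases hxn : x < n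
    · refine ⟨hxn, ?_⟩
      by_contra hPx
      have hsub : (Finset.range n).filter P ⊆ Finset.range x := by
        intro y hy
        simp only [mem_filter, mem_range] at hy ⊢
        by_contra hyx
        push_neg at hyx
        exact hPx (h x y hxn hy.1 hyx hy.2)
      have := Finset.card_le_card hsub
      simp only [card_range] at this
      omega
    · have h1 : ((Finset.range n).filter P).card ≤ n :=
        le_trans (card_filter_le _ _) (by simp)
      omega

lemma cntRows_mono (len : ℕ → ℕ) (f : ℕ → ℕ → ℕ) (v : ℕ) :
    Monotone (cntRows len f v) := fun s t hst =>
  Finset.sum_le_sum_of_subset (Finset.range_subset_range.2 hst)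

lemma cntRows_succ (len : ℕ → ℕ) (f : ℕ → ℕ → ℕ) (v s : ℕ) :
    cntRows len f v (s + 1) = cntRows len f v s + rowCount len f s v :=
  Finset.sum_range_succ _ _

lemma cntRows_zero (len : ℕ → ℕ) (f : ℕ → ℕ → ℕ) (v : ℕ) :
    cntRows len f v 0 = 0 := by simp [cntRows]

/-- the (0-indexed) row of the `b`-th occurrence of the value `v`. -/
def rowIdx (m : ℕ) (len : ℕ → ℕ) (f : ℕ → ℕ → ℕ) (v b : ℕ) : ℕ :=
  ((Finset.range m).filter (fun r => cntRows len f v (r + 1) ≤ b)).card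

lemma rowIdx_filter_eq (m : ℕ) (len : ℕ → ℕ) (f : ℕ → ℕ → ℕ) (v b : ℕ) :
    (Finset.range m).filter (fun r => cntRows len f v (r + 1) ≤ b)
      = Finset.range (rowIdx m len f v b) :=
  dc_filter_range_eq (fun x y _ _ hxy hy =>
    le_trans (cntRows_mono len f v (by omega)) hy)

lemma rowIdx_le (m : ℕ) (len : ℕ → ℕ) (f : ℕ → ℕ → ℕ) (v b : ℕ) :
    rowIdx m len f v b ≤ m :=
  le_trans (card_filter_le _ _) (by simp)

lemma cnt_le_of_lt_rowIdx {m : ℕ} {len : ℕ → ℕ} {f : ℕ → ℕ → ℕ} {v b r : ℕ}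
    (h : r < rowIdx m len f v b) : cntRows len f v (r + 1) ≤ b := by
  have : r ∈ (Finset.range m).filter (fun r => cntRows len f v (r + 1) ≤ b) := by
    rw [rowIdx_filter_eq]; exact mem_range.2 h
  exact (mem_filter.1 this).2

lemma rowIdx_lt {m : ℕ} {len : ℕ → ℕ} {f : ℕ → ℕ → ℕ} {v b : ℕ}
    (h : b < cntRows len f v m) : rowIdx m len f v b < m := by
  have hm : 0 < m := by
    by_contra hm; push_neg at hm
    interval_cases m
    rw [cntRows_zero] at h; omega
  have hle := rowIdx_le m len f v b
  rcases eq_or_lt_of_le hle with he | hl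
  · exfalso
    have h2 : cntRows len f v ((m - 1) + 1) ≤ b :=
      cnt_le_of_lt_rowIdx (m := m) (by omega)
    have hmm : m - 1 + 1 = m := by omega
    rw [hmm] at h2; omega
  · exact hl

lemma cnt_rowIdx_le {m : ℕ} {len : ℕ → ℕ} {f : ℕ → ℕ → ℕ} {v b : ℕ} :
    cntRows len f v (rowIdx m len f v b) ≤ b := by
  rcases Nat.eq_zero_or_pos (rowIdx m len f v b) with h0 | h0
  · rw [h0, cntRows_zero]; omega
  · have h2 : cntRows len f v ((rowIdx m len f v b - 1) + 1) ≤ b :=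
      cnt_le_of_lt_rowIdx (m := m) (by omega)
    have hmm : rowIdx m len f v b - 1 + 1 = rowIdx m len f v b := by omega
    rwa [hmm] at h2

lemma lt_cnt_rowIdx_succ {m : ℕ} {len : ℕ → ℕ} {f : ℕ → ℕ → ℕ} {v b : ℕ}
    (h : b < cntRows len f v m) : b < cntRows len f v (rowIdx m len f v b + 1) := by
  by_contra hc
  push_neg at hc
  have hmem : rowIdx m len f v b ∈
      (Finset.range m).filter (fun r => cntRows len f v (r + 1) ≤ b) :=
    mem_filter.2 ⟨mem_range.2 (rowIdx_lt h), hc⟩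
  rw [rowIdx_filter_eq] at hmem
  exact absurd (mem_range.1 hmem) (lt_irrefl _)

lemma row_mono {m : ℕ} {len : ℕ → ℕ} {f : ℕ → ℕ → ℕ} (hw : RowsWeak m len f)
    {i : ℕ} (him : i < m) : ∀ x, x < len i → ∀ y, y ≤ x → f i y ≤ f i x := by
  intro x
  induction x with
  | zero =>
    intro _ y hy
    have : y = 0 := by omega
    subst this; exact le_refl _
  | succ n ih =>
    intro hx y hy
    rcases Nat.eq_or_lt_of_le hy with he | hl
    · subst he; exact le_refl _
    · exact le_trans (ih (by omega) y (by omega)) (hw i him n hx)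

/-- in a weakly increasing row, the `j`-th occurrence of `v` sits at column
`base + j` where `base` is the number of entries `< v`. -/
lemma row_cells {m : ℕ} {len : ℕ → ℕ} {f : ℕ → ℕ → ℕ} (hw : RowsWeak m len f)
    {i v j : ℕ} (him : i < m) (hj : j < rowCount len f i v) :
    ((Finset.range (len i)).filter (fun k => f i k < v)).card + j < len i ∧
    f i (((Finset.range (len i)).filter (fun k => f i k < v)).card + j) = v := by
  have hmono := row_mono hw him
  set base := ((Finset.range (len i)).filter (fun k => f i k < v)).card with hbase
  set c := ((Finset.range (len i)).filter (fun k => f i k ≤ v)).card with hc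
  have hltf : (Finset.range (len i)).filter (fun k => f i k < v) = Finset.range base :=
    dc_filter_range_eq (fun x y hx hy hxy hPy => lt_of_le_of_lt (hmono y hy x hxy) hPy)
  have hlef : (Finset.range (len i)).filter (fun k => f i k ≤ v) = Finset.range c :=
    dc_filter_range_eq (fun x y hx hy hxy hPy => le_trans (hmono y hy x hxy) hPy)
  have hsub : (Finset.range (len i)).filter (fun k => f i k < v)
      ⊆ (Finset.range (len i)).filter (fun k => f i k ≤ v) := by
    intro k hk
    simp only [mem_filter] at hk ⊢
    exact ⟨hk.1, le_of_lt hk.2⟩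
  have hbc : base ≤ c := Finset.card_le_card hsub
  have hsd : (Finset.range (len i)).filter (fun k => f i k = v)
      = (Finset.range (len i)).filter (fun k => f i k ≤ v)
        \ (Finset.range (len i)).filter (fun k => f i k < v) := by
    ext k
    simp only [mem_filter, mem_sdiff, mem_range]
    omega
  have hcard : rowCount len f i v = c - base := by
    rw [rowCount, hsd, Finset.card_sdiff_of_subset hsub]
  have hjc : base + j < c := by omega
  have hmem : base + j ∈ (Finset.range (len i)).filter (fun k => f i k ≤ v) := by
    rw [hlef]; exact mem_range.2 hjc
  have hnmem : base + j ∉ (Finset.range (len i)).filter (fun k => f i k < v) := by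
    rw [hltf]; simp
  simp only [mem_filter, mem_range] at hmem hnmem
  have h1 : base + j < len i := hmem.1
  have h2 : ¬ f i (base + j) < v := fun hlt => hnmem ⟨h1, hlt⟩
  exact ⟨h1, by omega⟩

/-- the cell of the `b`-th occurrence of the value `v` (rows top to bottom,
within each row left to right). -/
def occCell (m : ℕ) (len : ℕ → ℕ) (f : ℕ → ℕ → ℕ) (v b : ℕ) : ℕ × ℕ :=
  (rowIdx m len f v b,
   ((Finset.range (len (rowIdx m len f v b))).filter
      (fun k => f (rowIdx m len f v b) k < v)).card
     + (b - cntRows len f v (rowIdx m len f v b)))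

lemma occCell_spec {m : ℕ} {len : ℕ → ℕ} {f : ℕ → ℕ → ℕ} (hw : RowsWeak m len f)
    {v b : ℕ} (hb : b < cntRows len f v m) :
    (occCell m len f v b).1 < m ∧ (occCell m len f v b).2 < len (occCell m len f v b).1 ∧
    f (occCell m len f v b).1 (occCell m len f v b).2 = v := by
  have h1 : rowIdx m len f v b < m := rowIdx_lt hb
  have h2 : cntRows len f v (rowIdx m len f v b) ≤ b := cnt_rowIdx_le
  have h3 : b < cntRows len f v (rowIdx m len f v b + 1) := lt_cnt_rowIdx_succ hb
  rw [cntRows_succ] at h3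
  have hj : b - cntRows len f v (rowIdx m len f v b)
      < rowCount len f (rowIdx m len f v b) v := by omega
  have := row_cells hw h1 hj
  exact ⟨h1, this.1, this.2⟩

lemma occCell_inj {m : ℕ} {len : ℕ → ℕ} {f : ℕ → ℕ → ℕ}
    {v b b' : ℕ} (hb : b < cntRows len f v m) (hb' : b' < cntRows len f v m)
    (hne : b ≠ b') : occCell m len f v b ≠ occCell m len f v b' := by
  intro he
  by_cases hr : rowIdx m len f v b = rowIdx m len f v b'
  · have h2 : cntRows len f v (rowIdx m len f v b) ≤ b := cnt_rowIdx_le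
    have h2' : cntRows len f v (rowIdx m len f v b') ≤ b' := cnt_rowIdx_le
    have hsnd := congrArg Prod.snd he
    simp only [occCell] at hsnd
    rw [hr] at hsnd h2
    omega
  · exact hr (congrArg Prod.fst he)

/-- all cells with value `v` in rows `s ≤ i < t`. -/
def cellsIn (len : ℕ → ℕ) (f : ℕ → ℕ → ℕ) (v s t : ℕ) : Finset (ℕ × ℕ) :=
  (Finset.Ico s t).biUnion (fun i =>
    ((Finset.range (len i)).filter (fun k => f i k = v)).image (fun k => (i, k)))

lemma mem_cellsIn {len : ℕ → ℕ} {f : ℕ → ℕ → ℕ} {v s t : ℕ} {c : ℕ × ℕ} :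
    c ∈ cellsIn len f v s t ↔
      s ≤ c.1 ∧ c.1 < t ∧ c.2 < len c.1 ∧ f c.1 c.2 = v := by
  obtain ⟨i, k⟩ := c
  simp only [cellsIn, mem_biUnion, mem_Ico, mem_image, mem_filter, mem_range]
  constructor
  · rintro ⟨i', ⟨hi1, hi2⟩, k', ⟨hk1, hk2⟩, he⟩
    obtain ⟨rfl, rfl⟩ := Prod.mk.injEq .. ▸ (Prod.mk.inj he)
    exact ⟨hi1, hi2, hk1, hk2⟩
  · rintro ⟨h1, h2, h3, h4⟩
    exact ⟨i, ⟨h1, h2⟩, k, ⟨h3, h4⟩, rfl⟩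

lemma card_cellsIn (len : ℕ → ℕ) (f : ℕ → ℕ → ℕ) (v s t : ℕ) :
    (cellsIn len f v s t).card = ∑ i ∈ Finset.Ico s t, rowCount len f i v := by
  rw [cellsIn, Finset.card_biUnion]
  · refine Finset.sum_congr rfl (fun i _ => ?_)
    rw [Finset.card_image_of_injective _ (fun a b hab => (Prod.mk.inj hab).2)]
    rfl
  · intro i _ i' _ hne
    simp only [Finset.disjoint_left, mem_image, mem_filter]
    rintro c ⟨k, _, rfl⟩ ⟨k', _, he⟩
    exact hne (Prod.mk.inj he).1.symm

lemma card_cellsIn_zero (len : ℕ → ℕ) (f : ℕ → ℕ → ℕ) (v t : ℕ) :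
    (cellsIn len f v 0 t).card = cntRows len f v t := by
  rw [card_cellsIn, cntRows, Finset.range_eq_Ico]

lemma zeta_bddAbove (m : ℕ) (len : ℕ → ℕ) (f : ℕ → ℕ → ℕ) {L : ℕ}
    (hL : ∀ i, len i ≤ L) (v : ℕ) :
    BddAbove {c | ∃ M, IsDescentPairs m len f v M ∧ M.card = c} := by
  refine ⟨(((Finset.range m ×ˢ Finset.range L) ×ˢ
      (Finset.range m ×ˢ Finset.range L))).card, ?_⟩
  rintro c ⟨M, hM, rfl⟩
  refine Finset.card_le_card (fun p hp => ?_)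
  obtain ⟨h1, h2, h3, h4, _⟩ := hM.1 p hp
  simp only [Finset.mem_product, mem_range]
  exact ⟨⟨h1, lt_of_lt_of_le h2 (hL _)⟩, ⟨h3, lt_of_lt_of_le h4 (hL _)⟩⟩

lemma zeta_exists (m : ℕ) (len : ℕ → ℕ) (f : ℕ → ℕ → ℕ) {L : ℕ}
    (hL : ∀ i, len i ≤ L) (v : ℕ) :
    ∃ M, IsDescentPairs m len f v M ∧ M.card = zeta m len f v := by
  have hne : (0 : ℕ) ∈ {c | ∃ M, IsDescentPairs m len f v M ∧ M.card = c} :=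
    ⟨∅, ⟨fun p hp => absurd hp (Finset.notMem_empty p),
        fun p hp => absurd hp (Finset.notMem_empty p)⟩, Finset.card_empty⟩
  exact Nat.sSup_mem ⟨0, hne⟩ (zeta_bddAbove m len f hL v)

lemma le_zeta {m : ℕ} {len : ℕ → ℕ} {f : ℕ → ℕ → ℕ} {L : ℕ}
    (hL : ∀ i, len i ≤ L) {v : ℕ} {M : Finset ((ℕ × ℕ) × (ℕ × ℕ))}
    (hM : IsDescentPairs m len f v M) : M.card ≤ zeta m len f v :=
  le_csSup (zeta_bddAbove m len f hL v) ⟨M, hM, rfl⟩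

lemma shOff_succ {m : ℕ} (nu : ℕ → ℕ) {r : ℕ} (hr : r + 1 < m) :
    shOff m nu r = nu r + shOff m nu (r + 1) := by
  rw [shOff, shOff, Finset.sum_eq_sum_Ico_succ_bot (by omega : r < m - 1)]

end ThetaHelpers

/-- For `T ∈ SST(λ,μ)`, the filling `θ_ν(T)` of `Sh_ν(μ)` is
semistandard iff `ν_i ≥ d_i(T)` for every `1 ≤ i ≤ m-1` (here `nu r = ν_{r+1}`). -/
theorem theta_semistandard_iff (m : ℕ) (lam mu nu : ℕ → ℕ)
    (hlam : ∀ i, lam (i + 1) ≤ lam i) (hlam0 : ∀ i, m ≤ i → lam i = 0)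
    (hmu0 : ∀ i, m ≤ i → mu i = 0)
    (hsize : ∑ i ∈ Finset.range m, mu i = ∑ i ∈ Finset.range m, lam i)
    (hnu : ∀ r, r + 1 < m → mu (r + 1) ≤ nu r + mu r) :
    ∀ f ∈ SSTset m (fun _ => 0) lam mu,
      (Semistandard m (shOff m nu) mu (theta m lam mu f) ↔
        ∀ r, r + 1 < m → expnt m lam mu f (r + 1) ≤ nu r) := by
  intro f hf
  obtain ⟨hfill, ⟨hrw, _hcs⟩, hcont⟩ := hf
  have hcnt : ∀ v, cntRows lam f (v + 1) m = mu v := fun v => hcont v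
  have hlamle : ∀ i, lam i ≤ lam 0 := by
    intro i
    induction i with
    | zero => exact le_refl _
    | succ n ih => exact le_trans (hlam n) ih
  constructor
  · -- semistandard θ ⟹ exponents small
    rintro ⟨_, hcols⟩ r hr
    by_cases hqn : mu (r + 1) ≤ nu r
    · exact le_trans (Nat.sub_le _ _) hqn
    push_neg at hqn
    have hrm : r < m := by omega
    have hmur : mu (r + 1) ≤ nu r + mu r := hnu r hr
    have hc1 : cntRows lam f (r + 1) m = mu r := hcnt r
    have hc2 : cntRows lam f (r + 2) m = mu (r + 1) := hcnt (r + 1)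
    have hso : shOff m nu r = nu r + shOff m nu (r + 1) := shOff_succ nu hr
    -- the key column-strictness consequence
    have hrowlt : ∀ b, nu r ≤ b → b < mu (r + 1) →
        rowIdx m lam f (r + 1) (b - nu r) < rowIdx m lam f (r + 2) b := by
      intro b hb1 hb2
      have hcol := hcols r (shOff m nu (r + 1) + b) hr
        (by rw [hso]; omega) (by rw [hso]; omega) (by omega) (by omega)
      have e1 : shOff m nu (r + 1) + b - shOff m nu r = b - nu r := by
        rw [hso]; omega
      have e2 : shOff m nu (r + 1) + b - shOff m nu (r + 1) = b := by omega
      rw [e1, e2] at hcol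
      simp only [theta] at hcol
      have e3 : r + 1 + 1 = r + 2 := by omega
      rw [e3] at hcol
      rw [if_pos (show r < m ∧ b - nu r < mu r from ⟨hrm, by omega⟩),
        if_pos (show r + 1 < m ∧ b < mu (r + 1) from ⟨hr, hb2⟩)] at hcol
      rw [rowIdx, rowIdx]
      omega
    have hbr : ∀ b, nu r ≤ b → b < mu (r + 1) →
        b - nu r < cntRows lam f (r + 1) m := by
      intro b h1 h2; rw [hc1]; omega
    have hbq : ∀ b, b < mu (r + 1) → b < cntRows lam f (r + 2) m := by
      intro b h2; rw [hc2]; exact h2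
    set M := (Finset.Ico (nu r) (mu (r + 1))).image
        (fun b => (occCell m lam f (r + 1) (b - nu r), occCell m lam f (r + 2) b))
      with hMdef
    have hMdp : IsDescentPairs m lam f (r + 1) M := by
      constructor
      · intro p hp
        rw [hMdef, Finset.mem_image] at hp
        obtain ⟨b, hb, rfl⟩ := hp
        rw [Finset.mem_Ico] at hb
        have hs1 := occCell_spec hrw (hbr b hb.1 hb.2)
        have hs2 := occCell_spec hrw (hbq b hb.2)
        refine ⟨hs1.1, hs1.2.1, hs2.1, hs2.2.1, hs1.2.2, hs2.2.2, ?_⟩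
        show rowIdx m lam f (r + 1) (b - nu r) < rowIdx m lam f (r + 2) b
        exact hrowlt b hb.1 hb.2
      · intro p hp q hq hne
        rw [hMdef, Finset.mem_image] at hp hq
        obtain ⟨b, hb, rfl⟩ := hp
        obtain ⟨b', hb', rfl⟩ := hq
        rw [Finset.mem_Ico] at hb hb'
        have hbb : b ≠ b' := fun he => hne (by rw [he])
        constructor
        · exact occCell_inj (hbr b hb.1 hb.2) (hbr b' hb'.1 hb'.2) (by omega)
        · exact occCell_inj (hbq b hb.2) (hbq b' hb'.2) hbb
    have hMcard : M.card = mu (r + 1) - nu r := by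
      rw [hMdef, Finset.card_image_of_injOn, Nat.card_Ico]
      intro b hb b' hb' he
      rw [Finset.coe_Ico, Set.mem_Ico] at hb hb'
      by_contra hbb
      exact occCell_inj (hbq b hb.2) (hbq b' hb'.2) hbb (congrArg Prod.snd he)
    have hle := le_zeta (m := m) hlamle hMdp
    rw [expnt, hMcard] at *
    omega
  · -- exponents small ⟹ semistandard θ
    intro hbound
    constructor
    · -- rows weakly increase
      intro i hi k hk
      simp only [theta]
      rw [if_pos (show i < m ∧ k < mu i from ⟨hi, by omega⟩),
        if_pos (show i < m ∧ k + 1 < mu i from ⟨hi, hk⟩)]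
      have hsub : (Finset.range m).filter (fun s => cntRows lam f (i + 1) (s + 1) ≤ k)
          ⊆ (Finset.range m).filter (fun s => cntRows lam f (i + 1) (s + 1) ≤ k + 1) := by
        intro s hs
        rw [Finset.mem_filter] at hs ⊢
        exact ⟨hs.1, by omega⟩
      have := Finset.card_le_card hsub
      omega
    · -- columns strictly increase
      intro r j hr hj1 hj2 hj3 hj4
      have hrm : r < m := by omega
      have hso : shOff m nu r = nu r + shOff m nu (r + 1) := shOff_succ nu hr
      set b := j - shOff m nu (r + 1) with hbdef
      have hb1 : nu r ≤ b := by rw [hbdef]; rw [hso] at hj1; omega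
      have hb2 : b < mu (r + 1) := by omega
      have hb3 : b - nu r < mu r := by rw [hso] at hj2; omega
      have e1 : j - shOff m nu r = b - nu r := by rw [hso]; omega
      rw [e1]
      simp only [theta]
      rw [if_pos (show r < m ∧ b - nu r < mu r from ⟨hrm, hb3⟩),
        if_pos (show r + 1 < m ∧ b < mu (r + 1) from ⟨hr, hb2⟩)]
      have hc1 : cntRows lam f (r + 1) m = mu r := hcnt r
      have hc2 : cntRows lam f (r + 2) m = mu (r + 1) := hcnt (r + 1)
      have hz : mu (r + 1) - zeta m lam f (r + 1) ≤ nu r := hbound r hr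
      obtain ⟨M, hM, hMcard⟩ := zeta_exists m lam f hlamle (r + 1)
      set A2 := rowIdx m lam f (r + 2) b with hA2def
      have hbq : b < cntRows lam f (r + 2) m := by rw [hc2]; exact hb2
      have hA2m : A2 < m := rowIdx_lt hbq
      have hA2cnt : b < cntRows lam f (r + 2) (A2 + 1) := lt_cnt_rowIdx_succ hbq
      -- split M by the row of the second cell
      have hsplit : (M.filter (fun p => p.2.1 ≤ A2)).card
          + (M.filter (fun p => ¬ p.2.1 ≤ A2)).card = M.card :=
        Finset.card_filter_add_card_filter_not _
      have h1card : (M.filter (fun p => p.2.1 ≤ A2)).card ≤ cntRows lam f (r + 1) A2 := by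
        rw [← card_cellsIn_zero lam f (r + 1) A2]
        refine Finset.card_le_card_of_injOn Prod.fst ?_ ?_
        · intro p hp
          rw [Finset.mem_coe, Finset.mem_filter] at hp
          obtain ⟨h1, h2, _, _, h5, _, h7⟩ := hM.1 p hp.1
          exact mem_cellsIn.2 ⟨Nat.zero_le _, by omega, h2, h5⟩
        · intro p hp q hq hpq
          by_contra hne
          rw [Finset.coe_filter, Set.mem_setOf_eq] at hp hq
          exact (hM.2 p hp.1 q hq.1 hne).1 hpq
      have h2card : (M.filter (fun p => ¬ p.2.1 ≤ A2)).card
          ≤ ∑ i ∈ Finset.Ico (A2 + 1) m, rowCount lam f i (r + 2) := by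
        rw [← card_cellsIn lam f (r + 2) (A2 + 1) m]
        refine Finset.card_le_card_of_injOn Prod.snd ?_ ?_
        · intro p hp
          rw [Finset.mem_coe, Finset.mem_filter] at hp
          obtain ⟨_, _, h3, h4, _, h6, _⟩ := hM.1 p hp.1
          exact mem_cellsIn.2 ⟨by omega, h3, h4, h6⟩
        · intro p hp q hq hpq
          by_contra hne
          rw [Finset.coe_filter, Set.mem_setOf_eq] at hp hq
          exact (hM.2 p hp.1 q hq.1 hne).2 hpq
      have hsum : cntRows lam f (r + 2) (A2 + 1)
          + ∑ i ∈ Finset.Ico (A2 + 1) m, rowCount lam f i (r + 2)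
          = cntRows lam f (r + 2) m := by
        rw [cntRows, cntRows, Finset.range_eq_Ico, Finset.range_eq_Ico]
        exact Finset.sum_Ico_consecutive _ (Nat.zero_le _) (by omega)
      have key : b - nu r < cntRows lam f (r + 1) A2 := by omega
      -- conclude strict inequality of row indices
      have hfin : rowIdx m lam f (r + 1) (b - nu r) < A2 := by
        by_contra hcc
        push_neg at hcc
        have hA2pos : 0 < A2 := by
          by_contra h0
          push_neg at h0
          interval_cases A2
          rw [cntRows_zero] at key
          omega
        have hle2 : cntRows lam f (r + 1) ((A2 - 1) + 1) ≤ b - nu r :=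
          cnt_le_of_lt_rowIdx (m := m) (by omega)
        have hmm : A2 - 1 + 1 = A2 := by omega
        rw [hmm] at hle2
        omega
      have e3 : r + 1 + 1 = r + 2 := by omega
      rw [e3]
      rw [hA2def, rowIdx, rowIdx] at hfin
      omega
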